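/- For every integer k with 2 ≤ k ≤ n, all natural numbers λ_1,…,λ_{k−1} with λ_1+⋯+λ_{k−1} ≤ r, and every tuple 𝐣 ∈ [k,n]^{r−(λ_1+⋯+λ_{k−1})}, one has f_k(ω_1^{⊗λ_1}⊗ω_2^{⊗λ_2}⊗⋯⊗ω_{k−1}^{⊗λ_{k−1}}⊗ω_𝐣) = Σ_{s=1}^{λ_1} q^{1−s}·ω_1^{⊗(s−1)}⊗ω_k⊗ω_1^{⊗(λ_1−s)}⊗ω_2^{⊗λ_2}⊗⋯⊗ω_{k−1}^{⊗λ_{k−1}}⊗ω_𝐣, where ω_𝐣 = ω_{j_1}⊗⋯⊗ω_{j_m}. -/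

import Mathlib

/-!
Statement 1: Lemma 5.4 (action of `f_k`) of Du–Fu,
"Small Representations for Affine q-Schur Algebras".

We model the tensor space `Ω_n^{⊗r}` inside the free ℂ-module on tuples `ℕ → ℕ`
(positions are 0-based; positions `≥ r` are never touched by the operators involved).
-/

open Finsupp

/-- The diagonal coefficient of `K̃_i⁻¹` on `ω_v`: `q^{-δ_{i,v}+δ_{i+1,v}}`. -/
noncomputable def Kcoef (q : ℂ) (i : ℕ) (v : ℕ) : ℂ :=
  if v = i then q⁻¹ else if v = i + 1 then q else 1

/-- The operator `Δ^{(r)}(F_i) = ∑_{s=1}^r (K̃_i⁻¹)^{⊗(s-1)} ⊗ F_i ⊗ 1^{⊗(r-s)}`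
on the tensor space, where `F_i·ω_j = δ_{i,j}·ω_{j+1}` (all indices 1-based,
positions 0-based). -/
noncomputable def DF (q : ℂ) (r i : ℕ) :
    ((ℕ → ℕ) →₀ ℂ) →ₗ[ℂ] ((ℕ → ℕ) →₀ ℂ) :=
  Finsupp.lift ((ℕ → ℕ) →₀ ℂ) ℂ (ℕ → ℕ) fun f =>
    ∑ s ∈ Finset.range r, (∏ t ∈ Finset.range s, Kcoef q i (f t)) •
      (if f s = i then Finsupp.single (Function.update f s (i + 1)) (1 : ℂ) else 0)

/-- The operators `f_k`: `f_2 = Δ^{(r)}(F_1)` and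
`f_k = Δ^{(r)}(F_{k-1}) ∘ f_{k-1} - q⁻¹ · f_{k-1} ∘ Δ^{(r)}(F_{k-1})`. -/
noncomputable def fk (q : ℂ) (r : ℕ) :
    ℕ → (((ℕ → ℕ) →₀ ℂ) →ₗ[ℂ] ((ℕ → ℕ) →₀ ℂ))
  | 0 => 0
  | 1 => 0
  | 2 => DF q r 1
  | (k + 3) => DF q r (k + 2) ∘ₗ fk q r (k + 2)
      - q⁻¹ • (fk q r (k + 2) ∘ₗ DF q r (k + 2))

lemma Kcoef_self (q : ℂ) (i : ℕ) : Kcoef q i i = q⁻¹ := by simp [Kcoef]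

lemma Kcoef_one (q : ℂ) (i v : ℕ) (h1 : v ≠ i) (h2 : v ≠ i + 1) : Kcoef q i v = 1 := by
  simp [Kcoef, h1, h2]

lemma DF_single (q : ℂ) (r i : ℕ) (g : ℕ → ℕ) :
    DF q r i (Finsupp.single g 1) =
      ∑ s ∈ Finset.range r, (∏ t ∈ Finset.range s, Kcoef q i (g t)) •
        (if g s = i then Finsupp.single (Function.update g s (i + 1)) (1 : ℂ) else 0) := by
  simp [DF, Finsupp.lift_apply, Finsupp.sum_single_index]

lemma DF_block (q : ℂ) (r i a b : ℕ) (g : ℕ → ℕ) (hbr : b ≤ r)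
    (hin : ∀ s, a ≤ s → s < b → g s = i)
    (hout : ∀ s, s < r → ¬(a ≤ s ∧ s < b) → g s ≠ i)
    (hpre : ∀ t, t < a → g t ≠ i ∧ g t ≠ i + 1) :
    DF q r i (Finsupp.single g 1) =
      ∑ m ∈ Finset.range (b - a), (q⁻¹) ^ m •
        Finsupp.single (Function.update g (a + m) (i + 1)) (1 : ℂ) := by
  rw [DF_single]
  have hsub : Finset.Ico a b ⊆ Finset.range r := by
    intro s hs; simp only [Finset.mem_Ico] at hs; simp only [Finset.mem_range]; omega
  have hzero : ∀ s ∈ Finset.range r, s ∉ Finset.Ico a b →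
      ((∏ t ∈ Finset.range s, Kcoef q i (g t)) •
        (if g s = i then Finsupp.single (Function.update g s (i + 1)) (1 : ℂ) else 0)) = 0 := by
    intro s hsr hs
    simp only [Finset.mem_range] at hsr
    simp only [Finset.mem_Ico, not_and, not_le, not_lt] at hs
    rw [if_neg (hout s hsr (by omega)), smul_zero]
  rw [← Finset.sum_subset hsub hzero]
  rw [Finset.sum_Ico_eq_sum_range]
  refine Finset.sum_congr rfl fun m hm => ?_
  simp only [Finset.mem_range] at hm
  rw [if_pos (hin _ (Nat.le_add_right a m) (by omega))]
  congr 1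
  rw [Finset.prod_range_add]
  have h1 : ∏ t ∈ Finset.range a, Kcoef q i (g t) = 1 := by
    refine Finset.prod_eq_one fun t ht => ?_
    simp only [Finset.mem_range] at ht
    exact Kcoef_one q i (g t) (hpre t ht).1 (hpre t ht).2
  have h2 : ∏ t ∈ Finset.range m, Kcoef q i (g (a + t)) = (q⁻¹) ^ m := by
    rw [Finset.prod_congr rfl (fun t ht => by
      rw [hin (a + t) (Nat.le_add_right a t) (by simp only [Finset.mem_range] at ht; omega),
        Kcoef_self]), Finset.prod_const, Finset.card_range]
  rw [h1, h2, one_mul]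

lemma DF_point_block (q : ℂ) (r i a b e : ℕ) (g : ℕ → ℕ) (hbr : b ≤ r) (hab : a ≤ b)
    (har : a ≤ r) (hea : e < a)
    (he : g e = i)
    (hin : ∀ s, a ≤ s → s < b → g s = i)
    (hout : ∀ s, s < r → s ≠ e → ¬(a ≤ s ∧ s < b) → g s ≠ i)
    (hpre : ∀ t, t < a → t ≠ e → g t ≠ i ∧ g t ≠ i + 1) :
    DF q r i (Finsupp.single g 1) =
      Finsupp.single (Function.update g e (i + 1)) (1 : ℂ) +
      ∑ m ∈ Finset.range (b - a), (q⁻¹) ^ (m + 1) •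
        Finsupp.single (Function.update g (a + m) (i + 1)) (1 : ℂ) := by
  rw [DF_single]
  have hsub : insert e (Finset.Ico a b) ⊆ Finset.range r := by
    intro s hs; simp only [Finset.mem_insert, Finset.mem_Ico] at hs
    simp only [Finset.mem_range]; omega
  have hzero : ∀ s ∈ Finset.range r, s ∉ insert e (Finset.Ico a b) →
      ((∏ t ∈ Finset.range s, Kcoef q i (g t)) •
        (if g s = i then Finsupp.single (Function.update g s (i + 1)) (1 : ℂ) else 0)) = 0 := by
    intro s hsr hs
    simp only [Finset.mem_range] at hsr
    simp only [Finset.mem_insert, Finset.mem_Ico, not_or] at hs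
    rw [if_neg (hout s hsr hs.1 hs.2), smul_zero]
  rw [← Finset.sum_subset hsub hzero]
  rw [Finset.sum_insert (by simp only [Finset.mem_Ico]; omega)]
  congr 1
  · rw [if_pos he]
    have h1 : ∏ t ∈ Finset.range e, Kcoef q i (g t) = 1 := by
      refine Finset.prod_eq_one fun t ht => ?_
      simp only [Finset.mem_range] at ht
      exact Kcoef_one q i (g t) (hpre t (by omega) (by omega)).1 (hpre t (by omega) (by omega)).2
    rw [h1, one_smul]
  · rw [Finset.sum_Ico_eq_sum_range]
    refine Finset.sum_congr rfl fun m hm => ?_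
    simp only [Finset.mem_range] at hm
    rw [if_pos (hin _ (Nat.le_add_right a m) (by omega))]
    congr 1
    rw [Finset.prod_range_add]
    have h1 : ∏ t ∈ Finset.range a, Kcoef q i (g t) = q⁻¹ := by
      rw [Finset.prod_eq_single_of_mem e (by simpa using hea) (fun t ht hte => by
        simp only [Finset.mem_range] at ht
        exact Kcoef_one q i (g t) (hpre t ht hte).1 (hpre t ht hte).2), he, Kcoef_self]
    have h2 : ∏ t ∈ Finset.range m, Kcoef q i (g (a + t)) = (q⁻¹) ^ m := by
      rw [Finset.prod_congr rfl (fun t ht => by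
        rw [hin (a + t) (Nat.le_add_right a t) (by simp only [Finset.mem_range] at ht; omega),
          Kcoef_self]), Finset.prod_const, Finset.card_range]
    rw [h1, h2]
    ring

lemma fk_succ (q : ℂ) (r k : ℕ) (hk : 2 ≤ k) :
    fk q r (k + 1) = DF q r k ∘ₗ fk q r k - q⁻¹ • (fk q r k ∘ₗ DF q r k) := by
  obtain ⟨m, rfl⟩ : ∃ m, k = m + 2 := ⟨k - 2, by omega⟩
  rfl

lemma filter_Icc_pred (k : ℕ) (P : ℕ → Prop) [DecidablePred P] (h : ¬ P k) :
    (Finset.Icc 1 k).filter P = (Finset.Icc 1 (k - 1)).filter P := by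
  ext i
  simp only [Finset.mem_filter, Finset.mem_Icc]
  constructor
  · rintro ⟨⟨h1, h2⟩, h3⟩
    refine ⟨⟨h1, ?_⟩, h3⟩
    rcases Nat.lt_or_ge i k with h' | h'
    · omega
    · have hik : i = k := by omega
      subst hik; exact absurd h3 h
  · rintro ⟨⟨h1, h2⟩, h3⟩; exact ⟨⟨h1, by omega⟩, h3⟩

lemma main_lemma (q : ℂ) (n r : ℕ) :
    ∀ k, 2 ≤ k → k ≤ n → ∀ lam g : ℕ → ℕ,
    (∑ j ∈ Finset.Icc 1 (k - 1), lam j) ≤ r →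
    (∀ p, p < (∑ j ∈ Finset.Icc 1 (k - 1), lam j) →
      g p = 1 + ((Finset.Icc 1 (k - 1)).filter
        (fun i => (∑ j ∈ Finset.Icc 1 i, lam j) ≤ p)).card) →
    (∀ p, (∑ j ∈ Finset.Icc 1 (k - 1), lam j) ≤ p → p < r → k ≤ g p ∧ g p ≤ n) →
    fk q r k (Finsupp.single g 1)
      = ∑ m ∈ Finset.range (lam 1), (q⁻¹) ^ m •
          Finsupp.single (Function.update g m k) (1 : ℂ) := by
  intro k hk
  induction k, hk using Nat.le_induction with
  | base =>
    intro hkn lam g hS hg1 hg2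
    simp only [Nat.sub_self, Finset.Icc_self, Finset.sum_singleton] at hS hg1 hg2
    -- note : 2 - 1 = 1
    have key : fk q r 2 (Finsupp.single g 1)
        = ∑ m ∈ Finset.range (lam 1 - 0), (q⁻¹) ^ m •
            Finsupp.single (Function.update g (0 + m) 2) (1 : ℂ) := by
      show DF q r 1 (Finsupp.single g 1) = _
      refine DF_block q r 1 0 (lam 1) g hS ?_ ?_ ?_
      · intro s _ hs
        have h := hg1 s hs
        have hempty : ({1} : Finset ℕ).filter (fun i => (∑ j ∈ Finset.Icc 1 i, lam j) ≤ s)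
            = ∅ := by
          refine Finset.filter_eq_empty_iff.mpr fun i hi => ?_
          simp only [Finset.mem_singleton] at hi
          subst hi
          simp only [Finset.Icc_self, Finset.sum_singleton]
          omega
        rw [hempty] at h
        simpa using h
      · intro s hsr hs
        have := hg2 s (by omega) hsr
        omega
      · intro t ht; omega
    simpa using key
  | succ k hk ih =>
    intro hk1n lam g hS hg1 hg2
    simp only [Nat.add_sub_cancel] at hS hg1 hg2
    set S1 := ∑ j ∈ Finset.Icc 1 (k - 1), lam j with hS1def
    set S2 := ∑ j ∈ Finset.Icc 1 k, lam j with hS2def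
    have hmono : ∀ i i', i ≤ i' →
        (∑ j ∈ Finset.Icc 1 i, lam j) ≤ ∑ j ∈ Finset.Icc 1 i', lam j := by
      intro i i' h
      exact Finset.sum_le_sum_of_subset (Finset.Icc_subset_Icc_right h)
    have h1S1 : lam 1 ≤ S1 :=
      Finset.single_le_sum (f := lam) (fun i _ => Nat.zero_le _)
        (Finset.mem_Icc.mpr ⟨le_refl 1, by omega⟩)
    have hS12 : S1 ≤ S2 := hmono (k - 1) k (by omega)
    have hS2S1 : S2 = S1 + lam k := by
      rw [hS2def, hS1def]
      have hk1 : k - 1 + 1 = k := by omega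
      rw [← hk1, Finset.sum_Icc_succ_top (by omega), hk1]
    have hg_lt : ∀ p, p < lam 1 → g p = 1 := by
      intro p hp
      have h := hg1 p (by omega)
      have hempty : (Finset.Icc 1 k).filter (fun i => (∑ j ∈ Finset.Icc 1 i, lam j) ≤ p)
          = ∅ := by
        refine Finset.filter_eq_empty_iff.mpr fun i hi => ?_
        simp only [Finset.mem_Icc] at hi
        have : lam 1 ≤ ∑ j ∈ Finset.Icc 1 i, lam j :=
          Finset.single_le_sum (f := lam) (fun i _ => Nat.zero_le _)
            (Finset.mem_Icc.mpr ⟨le_refl 1, hi.1⟩)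
        omega
      rw [hempty] at h
      simpa using h
    have hg_mid : ∀ p, p < S1 → g p ≤ k - 1 := by
      intro p hp
      have h := hg1 p (by omega)
      have hsub : (Finset.Icc 1 k).filter (fun i => (∑ j ∈ Finset.Icc 1 i, lam j) ≤ p)
          ⊆ Finset.Icc 1 (k - 2) := by
        intro i hi
        simp only [Finset.mem_filter, Finset.mem_Icc] at hi
        simp only [Finset.mem_Icc]
        refine ⟨hi.1.1, ?_⟩
        by_contra hc
        have hik : k - 1 ≤ i := by omega
        have := hmono (k - 1) i hik
        omega
      have hcard : ((Finset.Icc 1 k).filter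
          (fun i => (∑ j ∈ Finset.Icc 1 i, lam j) ≤ p)).card ≤ k - 2 := by
        have := Finset.card_le_card hsub
        simpa [Nat.card_Icc] using this
      omega
    have hg_blk : ∀ p, S1 ≤ p → p < S2 → g p = k := by
      intro p hp1 hp2
      have h := hg1 p hp2
      have heq : (Finset.Icc 1 k).filter (fun i => (∑ j ∈ Finset.Icc 1 i, lam j) ≤ p)
          = Finset.Icc 1 (k - 1) := by
        ext i
        simp only [Finset.mem_filter, Finset.mem_Icc]
        constructor
        · rintro ⟨⟨hi1, hi2⟩, hi3⟩
          refine ⟨hi1, ?_⟩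
          by_contra hc
          have hik : i = k := by omega
          subst hik
          omega
        · rintro ⟨hi1, hi2⟩
          exact ⟨⟨hi1, by omega⟩, le_trans (hmono i (k - 1) hi2) hp1⟩
      rw [heq] at h
      rw [h, Nat.card_Icc]
      omega
    have hg_hi : ∀ p, S2 ≤ p → p < r → k + 1 ≤ g p ∧ g p ≤ n := hg2
    -- hypotheses of ih for a function h agreeing with g below S1 and in [k, n] above
    have hih : ∀ h : ℕ → ℕ, (∀ p, p < S1 → h p = g p) →
        (∀ p, S1 ≤ p → p < r → k ≤ h p ∧ h p ≤ n) →
        fk q r k (Finsupp.single h 1)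
          = ∑ m ∈ Finset.range (lam 1), (q⁻¹) ^ m •
              Finsupp.single (Function.update h m k) (1 : ℂ) := by
      intro h hlow hhigh
      refine ih (by omega) lam h (le_trans hS12 hS) ?_ hhigh
      intro p hp
      rw [hlow p hp, hg1 p (by omega)]
      congr 1
      exact congrArg Finset.card (filter_Icc_pred k
        (fun i => (∑ j ∈ Finset.Icc 1 i, lam j) ≤ p) (by
          show ¬ (∑ j ∈ Finset.Icc 1 k, lam j) ≤ p
          omega))
    -- IH applied to g itself
    have hgk : ∀ p, S1 ≤ p → p < r → k ≤ g p ∧ g p ≤ n := by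
      intro p hp1 hp2
      rcases Nat.lt_or_ge p S2 with h' | h'
      · rw [hg_blk p hp1 h']; exact ⟨le_refl k, by omega⟩
      · have := hg_hi p h' hp2; omega
    have IH1 : fk q r k (Finsupp.single g 1)
        = ∑ m ∈ Finset.range (lam 1), (q⁻¹) ^ m •
            Finsupp.single (Function.update g m k) (1 : ℂ) :=
      hih g (fun _ _ => rfl) hgk
    -- DF on single g : block at [S1, S2)
    have hDFg : DF q r k (Finsupp.single g 1)
        = ∑ j ∈ Finset.range (lam k), (q⁻¹) ^ j •
            Finsupp.single (Function.update g (S1 + j) (k + 1)) (1 : ℂ) := by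
      have := DF_block q r k S1 S2 g (le_trans (le_of_eq hS2def.symm) hS)
        (fun s h1 h2 => hg_blk s h1 h2)
        (fun s hsr hs => by
          rcases Nat.lt_or_ge s S1 with h' | h'
          · have := hg_mid s h'; omega
          · have hs2 : S2 ≤ s := by omega
            have := hg_hi s hs2 hsr; omega)
        (fun t ht => by have := hg_mid t ht; omega)
      rwa [show S2 - S1 = lam k by omega] at this
    -- DF on single (update g m k) for m < lam 1 : point at m plus block [S1, S2)
    have hDFu : ∀ m, m < lam 1 →
        DF q r k (Finsupp.single (Function.update g m k) 1)
          = Finsupp.single (Function.update g m (k + 1)) (1 : ℂ) +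
            ∑ j ∈ Finset.range (lam k), (q⁻¹) ^ (j + 1) •
              Finsupp.single
                (Function.update (Function.update g m k) (S1 + j) (k + 1)) (1 : ℂ) := by
      intro m hm
      have hmS1 : m < S1 := by omega
      have := DF_point_block q r k S1 S2 m (Function.update g m k)
        (le_trans (le_of_eq hS2def.symm) hS) hS12 (le_trans hS12 hS) hmS1
        (Function.update_self m k g)
        (fun s h1 h2 => by
          rw [Function.update_of_ne (by omega)]
          exact hg_blk s h1 h2)
        (fun s hsr hsm hs => by
          rw [Function.update_of_ne hsm]
          rcases Nat.lt_or_ge s S1 with h' | h'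
          · have := hg_mid s h'; omega
          · have hs2 : S2 ≤ s := by omega
            have := hg_hi s hs2 hsr; omega)
        (fun t ht htm => by
          rw [Function.update_of_ne htm]
          have := hg_mid t ht; omega)
      rw [show S2 - S1 = lam k by omega] at this
      rwa [Function.update_idem] at this
    -- fk on single (update g (S1+j) (k+1)) for j < lam k
    have hfku : ∀ j, j < lam k →
        fk q r k (Finsupp.single (Function.update g (S1 + j) (k + 1)) 1)
          = ∑ m ∈ Finset.range (lam 1), (q⁻¹) ^ m •
              Finsupp.single
                (Function.update (Function.update g m k) (S1 + j) (k + 1)) (1 : ℂ) := by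
      intro j hj
      have h1 := hih (Function.update g (S1 + j) (k + 1))
        (fun p hp => Function.update_of_ne (by omega) _ _)
        (fun p hp1 hp2 => by
          rcases eq_or_ne p (S1 + j) with h' | h'
          · subst h'; rw [Function.update_self]; exact ⟨by omega, by omega⟩
          · rw [Function.update_of_ne h']; exact hgk p hp1 hp2)
      rw [h1]
      refine Finset.sum_congr rfl fun m hm => ?_
      simp only [Finset.mem_range] at hm
      rw [Function.update_comm (by omega : m ≠ S1 + j)]
    -- assemble
    rw [fk_succ q r k hk]
    simp only [LinearMap.sub_apply, LinearMap.comp_apply, LinearMap.smul_apply]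
    have hA : DF q r k (∑ m ∈ Finset.range (lam 1), (q⁻¹) ^ m •
          Finsupp.single (Function.update g m k) (1 : ℂ))
        = (∑ m ∈ Finset.range (lam 1), (q⁻¹) ^ m •
            Finsupp.single (Function.update g m (k + 1)) (1 : ℂ))
          + ∑ m ∈ Finset.range (lam 1), ∑ j ∈ Finset.range (lam k),
              ((q⁻¹) ^ m * (q⁻¹) ^ (j + 1)) •
                Finsupp.single
                  (Function.update (Function.update g m k) (S1 + j) (k + 1)) (1 : ℂ) := by
      rw [map_sum, ← Finset.sum_add_distrib]
      refine Finset.sum_congr rfl fun m hm => ?_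
      rw [map_smul, hDFu m (by simpa using hm), smul_add, Finset.smul_sum]
      congr 1
      exact Finset.sum_congr rfl fun j hj => by rw [smul_smul]
    have hB : fk q r k (∑ j ∈ Finset.range (lam k), (q⁻¹) ^ j •
          Finsupp.single (Function.update g (S1 + j) (k + 1)) (1 : ℂ))
        = ∑ j ∈ Finset.range (lam k), ∑ m ∈ Finset.range (lam 1),
            ((q⁻¹) ^ j * (q⁻¹) ^ m) •
              Finsupp.single
                (Function.update (Function.update g m k) (S1 + j) (k + 1)) (1 : ℂ) := by
      rw [map_sum]
      refine Finset.sum_congr rfl fun j hj => ?_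
      rw [map_smul, hfku j (by simpa using hj), Finset.smul_sum]
      exact Finset.sum_congr rfl fun m hm => by rw [smul_smul]
    rw [IH1, hDFg, hA, hB]
    have hC : q⁻¹ • (∑ j ∈ Finset.range (lam k), ∑ m ∈ Finset.range (lam 1),
            ((q⁻¹) ^ j * (q⁻¹) ^ m) •
              Finsupp.single
                (Function.update (Function.update g m k) (S1 + j) (k + 1)) (1 : ℂ))
        = ∑ m ∈ Finset.range (lam 1), ∑ j ∈ Finset.range (lam k),
              ((q⁻¹) ^ m * (q⁻¹) ^ (j + 1)) •
                Finsupp.single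
                  (Function.update (Function.update g m k) (S1 + j) (k + 1)) (1 : ℂ) := by
      rw [Finset.smul_sum, Finset.sum_comm]
      refine Finset.sum_congr rfl fun m hm => ?_
      rw [Finset.smul_sum]
      refine Finset.sum_congr rfl fun j hj => ?_
      rw [smul_smul]
      congr 1
      ring
    rw [hC]
    abel

lemma sum_reindex {M : Type*} [AddCommMonoid M] [Module ℂ M] (L : ℕ) (q : ℂ) (v : ℕ → M) :
    ∑ s ∈ Finset.Icc 1 L, q ^ ((1 : ℤ) - (s : ℤ)) • v (s - 1)
      = ∑ m ∈ Finset.range L, (q⁻¹) ^ m • v m := by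
  refine Finset.sum_nbij' (fun s => s - 1) (fun m => m + 1) ?_ ?_ ?_ ?_ ?_
  · intro s hs; simp only [Finset.mem_Icc] at hs; simp only [Finset.mem_range]; omega
  · intro m hm; simp only [Finset.mem_range] at hm; simp only [Finset.mem_Icc]; omega
  · intro s hs; simp only [Finset.mem_Icc] at hs; omega
  · intro m hm; omega
  · intro s hs
    simp only [Finset.mem_Icc] at hs
    congr 1
    have h1 : (1 : ℤ) - (s : ℤ) = -((s - 1 : ℕ) : ℤ) := by omega
    rw [h1, zpow_neg, zpow_natCast, inv_pow]

/-- For `2 ≤ k ≤ n`, `λ_1,…,λ_{k-1} ∈ ℕ` with `λ_1+⋯+λ_{k-1} ≤ r`, and a basis tuple `g`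
of the form `ω_1^{⊗λ_1}⊗⋯⊗ω_{k-1}^{⊗λ_{k-1}}⊗ω_𝐣` with `𝐣 ∈ [k,n]^{r-(λ_1+⋯+λ_{k-1})}`:
`f_k(ω_g) = ∑_{s=1}^{λ_1} q^{1-s}·ω_1^{⊗(s-1)}⊗ω_k⊗ω_1^{⊗(λ_1-s)}⊗ω_2^{⊗λ_2}⊗⋯⊗ω_𝐣`. -/
theorem stmt1 (q : ℂ) (hq : q ≠ 0) (n r : ℕ) (hn : 2 ≤ n) (hr : 1 ≤ r)
    (k : ℕ) (hk : 2 ≤ k) (hkn : k ≤ n) (lam : ℕ → ℕ)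
    (hS : (∑ j ∈ Finset.Icc 1 (k - 1), lam j) ≤ r)
    (g : ℕ → ℕ)
    (hg1 : ∀ p, p < (∑ j ∈ Finset.Icc 1 (k - 1), lam j) →
      g p = 1 + ((Finset.Icc 1 (k - 1)).filter
        (fun i => (∑ j ∈ Finset.Icc 1 i, lam j) ≤ p)).card)
    (hg2 : ∀ p, (∑ j ∈ Finset.Icc 1 (k - 1), lam j) ≤ p → p < r →
      k ≤ g p ∧ g p ≤ n) :
    fk q r k (Finsupp.single g 1)
      = ∑ s ∈ Finset.Icc 1 (lam 1),
          q ^ ((1 : ℤ) - (s : ℤ)) •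
            Finsupp.single (Function.update g (s - 1) k) (1 : ℂ) := by
  rw [main_lemma q n r k hk hkn lam g hS hg1 hg2]
  exact (sum_reindex (lam 1) q (fun p => Finsupp.single (Function.update g p k) (1 : ℂ))).symm
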